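/- Let f be the exponential generating function of the Catalan numbers and define u_1(t) = f'(t)/f(t). Then for every real t ≠ 0 with f(t) ≠ 0, u_1 satisfies the Riccati equation u_1'(t) + u_1(t)^2 − (4 − 2/t)·u_1(t) − 2/t = 0. -/

import Mathlib

open scoped Nat
open FormalMultilinearSeries

lemma catalan_rec_real (n : ℕ) :
    ((n : ℝ) + 2) * catalan (n + 1) = (4 * n + 2) * catalan n := by
  have h1 : ((n : ℝ) + 2) * catalan (n + 1) = Nat.centralBinom (n + 1) := by
    exact_mod_cast congrArg (Nat.cast : ℕ → ℝ) (succ_mul_catalan_eq_centralBinom (n + 1))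
  have h2 : ((n : ℝ) + 1) * catalan n = Nat.centralBinom n := by
    exact_mod_cast congrArg (Nat.cast : ℕ → ℝ) (succ_mul_catalan_eq_centralBinom n)
  have h3 : ((n : ℝ) + 1) * Nat.centralBinom (n + 1) = 2 * (2 * n + 1) * Nat.centralBinom n := by
    exact_mod_cast congrArg (Nat.cast : ℕ → ℝ) (Nat.succ_mul_centralBinom_succ n)
  have hn : ((n : ℝ) + 1) ≠ 0 := by positivity
  apply mul_left_cancel₀ hn
  linear_combination ((n : ℝ) + 1) * h1 + h3 - (4 * (n : ℝ) + 2) * h2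

lemma catalan_le_four_pow (n : ℕ) : (catalan n : ℝ) ≤ 4 ^ n := by
  induction n with
  | zero => simp
  | succ n ih =>
    have h := catalan_rec_real n
    have hc : (0 : ℝ) ≤ catalan n := by positivity
    have hn : (0 : ℝ) ≤ (n : ℝ) := n.cast_nonneg
    have key : (catalan (n + 1) : ℝ) ≤ 4 * catalan n := by nlinarith
    calc (catalan (n + 1) : ℝ) ≤ 4 * catalan n := key
    _ ≤ 4 * 4 ^ n := by linarith
    _ = 4 ^ (n + 1) := by ring

lemma catSummable (k : ℕ) (t : ℝ) :
    Summable (fun n : ℕ => (catalan (n + k) : ℝ) / n ! * t ^ n) := by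
  apply Summable.of_norm_bounded (g := fun n : ℕ => 4 ^ k * ((4 * |t|) ^ n / n !))
    ((Real.summable_pow_div_factorial (4 * |t|)).mul_left _)
  intro n
  have hc : (catalan (n + k) : ℝ) ≤ 4 ^ (n + k) := catalan_le_four_pow _
  have h0 : (0:ℝ) < n ! := by positivity
  rw [norm_mul, norm_div, norm_pow, Real.norm_eq_abs, Real.norm_eq_abs, Real.norm_eq_abs,
    Nat.abs_cast, Nat.abs_cast]
  have : (4:ℝ) ^ k * ((4 * |t|) ^ n / n !) = ((4 ^ (n + k)) * |t| ^ n) / n ! := by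
    rw [mul_pow, pow_add]; ring
  rw [this, div_mul_eq_mul_div]
  gcongr

noncomputable def catSeries (k : ℕ) : FormalMultilinearSeries ℝ ℝ ℝ :=
  ofScalars ℝ (fun n => (catalan (n + k) : ℝ) / n !)

noncomputable def catF (k : ℕ) : ℝ → ℝ :=
  ofScalarsSum (fun n => (catalan (n + k) : ℝ) / n !)

lemma catF_eq (k : ℕ) (t : ℝ) :
    catF k t = ∑' n : ℕ, (catalan (n + k) : ℝ) / n ! * t ^ n := by
  rw [catF, ofScalars_sum_eq]
  simp [smul_eq_mul]

lemma catHasSum (k : ℕ) (t : ℝ) :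
    HasSum (fun n : ℕ => (catalan (n + k) : ℝ) / n ! * t ^ n) (catF k t) := by
  rw [catF_eq]
  exact (catSummable k t).hasSum

lemma catRadius (k : ℕ) : (catSeries k).radius = ⊤ := by
  apply FormalMultilinearSeries.radius_eq_top_of_summable_norm
  intro r
  refine (catSummable k r).congr fun n => ?_
  rw [catSeries, ofScalars_norm]
  rw [Real.norm_eq_abs, abs_of_nonneg (by positivity)]

lemma catBall (k : ℕ) : HasFPowerSeriesOnBall (catF k) (catSeries k) 0 ⊤ := by
  have h := (catSeries k).hasFPowerSeriesOnBall (by rw [catRadius]; exact ENNReal.zero_lt_top)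
  rw [catRadius] at h
  exact h

lemma coef_step (k n : ℕ) :
    ((n : ℝ) + 1) * ((catalan (n + 1 + k) : ℝ) / (n + 1)!) =
      (catalan (n + (k + 1)) : ℝ) / n ! := by
  rw [show n + 1 + k = n + (k + 1) by omega, Nat.factorial_succ]
  have h0 : (0:ℝ) < n ! := by positivity
  have h1 : ((n:ℝ) + 1) ≠ 0 := by positivity
  push_cast
  field_simp

lemma catDeriv (k : ℕ) {t : ℝ} (ht : t ≠ 0) :
    HasDerivAt (catF k) (catF (k + 1) t) t := by
  have hb := catBall k
  have hmem : t ∈ EMetric.ball (0 : ℝ) ⊤ := EMetric.mem_ball.mpr (edist_lt_top _ _)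
  have hfd := hb.fderiv
  have hs := hfd.hasSum hmem
  rw [zero_add] at hs
  have hs2 := (ContinuousLinearMap.apply ℝ ℝ t).hasSum hs
  have hterm : (fun n : ℕ => (ContinuousLinearMap.apply ℝ ℝ t)
      ((catSeries k).derivSeries n fun _ => t)) =
      fun n : ℕ => (catalan (n + (k + 1)) : ℝ) / n ! * t ^ n * t := by
    funext n
    have hd := (catSeries k).derivSeries_apply_diag n t
    simp only [ContinuousLinearMap.apply_apply]
    rw [hd]
    rw [catSeries, ofScalars_apply_eq]
    rw [smul_eq_mul, nsmul_eq_mul]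
    push_cast
    rw [← coef_step k n]
    ring
  rw [hterm] at hs2
  have hs3 := (catHasSum (k + 1) t).mul_right t
  have key : (fderiv ℝ (catF k) t) t = catF (k + 1) t * t := hs2.unique hs3
  have hF : HasFDerivAt (catF k) (fderiv ℝ (catF k) t) t := by
    have := hb.hasFDerivAt (y := t) (by simp)
    rw [zero_add] at this
    exact this.fderiv ▸ this
  have hD : HasDerivAt (catF k) (deriv (catF k) t) t := hF.differentiableAt.hasDerivAt
  have : deriv (catF k) t = catF (k + 1) t := by
    have hde : (fderiv ℝ (catF k) t) t = t * deriv (catF k) t := by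
      conv_lhs => rw [show t = t • (1 : ℝ) by simp]
      rw [ContinuousLinearMap.map_smul, deriv]
      simp
    rw [hde] at key
    exact mul_left_cancel₀ ht (key.trans (mul_comm _ t))
  rwa [this] at hD

lemma coef_ode (n : ℕ) :
    ((catalan (n + 2) : ℝ) / (n !) - 4 * ((catalan (n + 1) : ℝ) / (n !))) =
      2 * ((catalan (n + 1) : ℝ) / (n + 1)!) - 2 * ((catalan (n + 2) : ℝ) / (n + 1)!) := by
  have hr := catalan_rec_real (n + 1)
  push_cast at hr
  rw [Nat.factorial_succ]
  have h0 : (0:ℝ) < n ! := by positivity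
  have h1 : ((n:ℝ) + 1) ≠ 0 := by positivity
  push_cast
  field_simp
  linear_combination hr

lemma cat_ode (t : ℝ) :
    t * catF 2 t + (2 - 4 * t) * catF 1 t - 2 * catF 0 t = 0 := by
  have h0 := catHasSum 0 t
  have h1 := catHasSum 1 t
  have h2 := catHasSum 2 t
  set v : ℕ → ℝ := fun n => (2 * ((catalan (n + 0) : ℝ) / n !)
      - 2 * ((catalan (n + 1) : ℝ) / n !)) * t ^ n with hv
  have hwv : HasSum v (2 * catF 0 t - 2 * catF 1 t) := by
    have hh := (h0.mul_left 2).sub (h1.mul_left 2)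
    have hfe : (fun n : ℕ => 2 * ((catalan (n + 0) : ℝ) / n ! * t ^ n)
        - 2 * ((catalan (n + 1) : ℝ) / n ! * t ^ n)) = v := by
      funext n; rw [hv]; ring
    rwa [hfe] at hh
  have hv0 : v 0 = 0 := by
    simp [hv, catalan_zero, catalan_one]
  have hshift : HasSum (fun n => v (n + 1)) (2 * catF 0 t - 2 * catF 1 t) := by
    refine (hasSum_nat_add_iff 1).mpr ?_
    simpa [hv0] using hwv
  have hu : HasSum (fun n => v (n + 1)) (t * catF 2 t - 4 * t * catF 1 t) := by
    have hh := (h2.mul_left t).sub (h1.mul_left (4 * t))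
    have hfe : (fun n : ℕ => t * ((catalan (n + 2) : ℝ) / n ! * t ^ n)
        - 4 * t * ((catalan (n + 1) : ℝ) / n ! * t ^ n)) = fun n => v (n + 1) := by
      funext n
      have hc := coef_ode n
      rw [hv]
      simp only [Nat.add_zero]
      rw [show n + 1 + 1 = n + 2 by omega, show n + 1 + 0 = n + 1 by omega]
      calc t * ((catalan (n + 2) : ℝ) / n ! * t ^ n)
          - 4 * t * ((catalan (n + 1) : ℝ) / n ! * t ^ n)
          = ((catalan (n + 2) : ℝ) / (n !) - 4 * ((catalan (n + 1) : ℝ) / (n !))) * t ^ (n + 1) := by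
            rw [pow_succ]; ring
        _ = (2 * ((catalan (n + 1) : ℝ) / (n + 1)!)
            - 2 * ((catalan (n + 2) : ℝ) / (n + 1)!)) * t ^ (n + 1) := by rw [hc]
    rwa [hfe] at hh
  have := hshift.unique hu
  linarith


/-- The exponential generating function of the Catalan numbers. -/
noncomputable def catalanEGF (t : ℝ) : ℝ := ∑' n : ℕ, (catalan n : ℝ) * t ^ n / n !

lemma catalanEGF_eq : catalanEGF = catF 0 := by
  funext s
  rw [catalanEGF, catF_eq]
  refine tsum_congr fun n => ?_
  rw [Nat.add_zero]
  ring

/-- Let u₁(t) = f'(t)/f(t), where f is the exponential generating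
function of the Catalan numbers. Then for every real t ≠ 0 with f(t) ≠ 0, u₁
satisfies the Riccati equation u₁'(t) + u₁(t)² − (4 − 2/t)·u₁(t) − 2/t = 0. -/
theorem catalan_egf_riccati (t : ℝ) (ht : t ≠ 0) (hf : catalanEGF t ≠ 0) :
    deriv (fun s => deriv catalanEGF s / catalanEGF s) t
      + (deriv catalanEGF t / catalanEGF t) ^ 2
      - (4 - 2 / t) * (deriv catalanEGF t / catalanEGF t) - 2 / t = 0 := by
  rw [catalanEGF_eq] at hf ⊢
  have hder : ∀ s : ℝ, s ≠ 0 → deriv (catF 0) s = catF 1 s := fun s hs => (catDeriv 0 hs).deriv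
  have hev : (fun s => deriv (catF 0) s / catF 0 s) =ᶠ[nhds t]
      (fun s => catF 1 s / catF 0 s) := by
    filter_upwards [eventually_ne_nhds ht] with s hs
    rw [hder s hs]
  rw [hev.deriv_eq, hder t ht]
  have hdiv : HasDerivAt (fun s => catF 1 s / catF 0 s)
      ((catF 2 t * catF 0 t - catF 1 t * catF 1 t) / (catF 0 t) ^ 2) t :=
    (catDeriv 1 ht).div (catDeriv 0 ht) hf
  rw [hdiv.deriv]
  have hode := cat_ode t
  have hF2 : catF 2 t = (4 - 2 / t) * catF 1 t + (2 / t) * catF 0 t := by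
    field_simp
    linarith [hode]
  rw [hF2]
  field_simp
  ring
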